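/- Let G have m edges and arboricity α, and let p > 0 be a real number. If τ ≥ p·α, and L is the set of vertices of degree at most τ, then m_L := Σ_{v∈L} deg(v) satisfies m_L ≥ m·(1 − 2/p). -/

import Mathlib

open scoped Classical

/-- The arboricity of a graph: the minimum number `k` such that the edge set can be
covered by `k` acyclic subgraphs (spanning forests). -/
noncomputable def arboricity {V : Type*} [Fintype V] (G : SimpleGraph V) : ℕ :=
  sInf {k : ℕ | ∃ f : Fin k → SimpleGraph V,
    (∀ i, (f i).IsAcyclic) ∧ (∀ i, f i ≤ G) ∧ G.edgeSet ⊆ ⋃ i, (f i).edgeSet}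

section Aux
open SimpleGraph

/-- In an acyclic graph, two adjacent vertices have different distances to any
vertex reachable from them. -/
lemma acyclic_dist_ne {V : Type*} {G : SimpleGraph V} (hG : G.IsAcyclic)
    {x y r : V} (hxy : G.Adj x y) (hx : G.Reachable x r) :
    G.dist x r ≠ G.dist y r := by
  classical
  intro hd
  have hy : G.Reachable y r := (hxy.symm.reachable).trans hx
  obtain ⟨q, hq, hql⟩ := hy.exists_path_of_dist
  have hxq : x ∉ q.support := by
    intro hmem
    have h1 : G.dist x r ≤ (q.dropUntil x hmem).length := dist_le _
    have h2 : (q.takeUntil x hmem).length + (q.dropUntil x hmem).length = q.length := by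
      rw [← SimpleGraph.Walk.length_append, SimpleGraph.Walk.take_spec]
    have h3 : (q.takeUntil x hmem).length ≠ 0 := fun h0 =>
      hxy.ne' (SimpleGraph.Walk.eq_of_length_eq_zero h0)
    omega
  obtain ⟨p, hp, hpl⟩ := hx.exists_path_of_dist
  have hc : (SimpleGraph.Walk.cons hxy q).IsPath := hq.cons hxq
  have hu := hG.path_unique ⟨p, hp⟩ ⟨_, hc⟩
  have hlen : p.length = q.length + 1 := by
    have : p = SimpleGraph.Walk.cons hxy q := congrArg Subtype.val hu
    rw [this, SimpleGraph.Walk.length_cons]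
  omega

/-- root of the connected component of a vertex -/
noncomputable def groot {V : Type*} (G : SimpleGraph V) (v : V) : V :=
  (G.connectedComponentMk v).out

lemma reachable_groot {V : Type*} (G : SimpleGraph V) (v : V) :
    G.Reachable v (groot G v) :=
  (ConnectedComponent.eq.mp (G.connectedComponentMk v).out_eq).symm

lemma groot_adj {V : Type*} {G : SimpleGraph V} {u v : V} (h : G.Adj u v) :
    groot G u = groot G v := by
  unfold groot
  rw [ConnectedComponent.eq.mpr h.reachable]

/-- pick the endpoint of an edge farther from the root of its component -/
noncomputable def epick {V : Type*} (G : SimpleGraph V) (e : Sym2 V) : V :=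
  let u := (Quot.out e).1
  let v := (Quot.out e).2
  if G.dist u (groot G u) < G.dist v (groot G u) then v else u

lemma epick_spec {V : Type*} {G : SimpleGraph V} (hG : G.IsAcyclic) {e : Sym2 V}
    (he : e ∈ G.edgeSet) :
    ∃ z, e = s(epick G e, z) ∧ G.Adj (epick G e) z ∧
      G.dist z (groot G (epick G e)) < G.dist (epick G e) (groot G (epick G e)) := by
  classical
  set u := (Quot.out e).1 with hu
  set v := (Quot.out e).2 with hv
  have heq : s(u, v) = e := by
    rw [hu, hv]
    exact Quot.out_eq e
  have hadj : G.Adj u v := by rw [← heq] at he; exact he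
  have hne := acyclic_dist_ne hG hadj (reachable_groot G u)
  have hpick : epick G e = if G.dist u (groot G u) < G.dist v (groot G u) then v else u := rfl
  by_cases hlt : G.dist u (groot G u) < G.dist v (groot G u)
  · refine ⟨u, ?_, ?_, ?_⟩
    · rw [hpick, if_pos hlt, ← heq, Sym2.eq_swap]
    · rw [hpick, if_pos hlt]; exact hadj.symm
    · rw [hpick, if_pos hlt, groot_adj hadj.symm]
      exact hlt
  · refine ⟨v, ?_, ?_, ?_⟩
    · rw [hpick, if_neg hlt, ← heq]
    · rw [hpick, if_neg hlt]; exact hadj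
    · rw [hpick, if_neg hlt]
      exact lt_of_le_of_ne (not_lt.mp hlt) hne.symm

/-- Any acyclic graph has at most `|S|` edges with both endpoints in `S`. -/
lemma acyclic_card_filter_le {V : Type*} [Fintype V] (G : SimpleGraph V)
    (hG : G.IsAcyclic) (S : Finset V) :
    (G.edgeSet.toFinset.filter (fun e => ∀ x ∈ e, x ∈ S)).card ≤ S.card := by
  classical
  apply Finset.card_le_card_of_injOn (epick G)
  · intro e he
    rw [Finset.mem_coe, Finset.mem_filter] at he
    obtain ⟨z, hez, hadj, _⟩ := epick_spec hG (Set.mem_toFinset.mp he.1)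
    have hm : (epick G e) ∈ s(epick G e, z) := Sym2.mem_mk_left _ _
    rw [← hez] at hm
    exact he.2 _ hm
  · intro e1 h1 e2 h2 hfe
    simp only [Finset.coe_filter, Set.mem_setOf_eq] at h1 h2
    obtain ⟨a, hea, hadja, hlta⟩ := epick_spec hG (Set.mem_toFinset.mp h1.1)
    obtain ⟨b, heb, hadjb, hltb⟩ := epick_spec hG (Set.mem_toFinset.mp h2.1)
    set w := epick G e1 with hw
    rw [← hfe] at heb hadjb hltb
    by_contra hne
    have hab : a ≠ b := by
      intro h; rw [h] at hea; rw [hea, ← heb] at hne; exact hne rfl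
    set r := groot G w with hr
    -- distances
    have hra : G.Reachable a r := hadja.symm.reachable.trans (reachable_groot G w)
    have hrb : G.Reachable b r := hadjb.symm.reachable.trans (reachable_groot G w)
    have hda : G.dist w r ≤ G.dist a r + 1 := by
      obtain ⟨q, hq, hql⟩ := hra.exists_path_of_dist
      have := SimpleGraph.dist_le (SimpleGraph.Walk.cons hadja q)
      rw [SimpleGraph.Walk.length_cons, hql] at this
      exact this
    -- note hlta : G.dist a r < G.dist w r  (groot G w = r)
    have hdaeq : G.dist a r + 1 = G.dist w r := by omega
    have hdbeq : G.dist b r + 1 = G.dist w r := by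
      have hdb : G.dist w r ≤ G.dist b r + 1 := by
        obtain ⟨q, hq, hql⟩ := hrb.exists_path_of_dist
        have := SimpleGraph.dist_le (SimpleGraph.Walk.cons hadjb q)
        rw [SimpleGraph.Walk.length_cons, hql] at this
        exact this
      omega
    -- build two distinct paths from w to r
    obtain ⟨pa, hpa, hpal⟩ := hra.exists_path_of_dist
    obtain ⟨pb, hpb, hpbl⟩ := hrb.exists_path_of_dist
    have hwa : w ∉ pa.support := by
      intro hmem
      have := SimpleGraph.dist_le (pa.dropUntil w hmem)
      have hle := SimpleGraph.Walk.length_dropUntil_le pa hmem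
      omega
    have hwb : w ∉ pb.support := by
      intro hmem
      have := SimpleGraph.dist_le (pb.dropUntil w hmem)
      have hle := SimpleGraph.Walk.length_dropUntil_le pb hmem
      omega
    have hca : (SimpleGraph.Walk.cons hadja pa).IsPath := hpa.cons hwa
    have hcb : (SimpleGraph.Walk.cons hadjb pb).IsPath := hpb.cons hwb
    have hu := hG.path_unique ⟨_, hca⟩ ⟨_, hcb⟩
    have hweq : (SimpleGraph.Walk.cons hadja pa) = (SimpleGraph.Walk.cons hadjb pb) :=
      congrArg Subtype.val hu
    have hsup := congrArg SimpleGraph.Walk.support hweq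
    rw [SimpleGraph.Walk.support_cons, SimpleGraph.Walk.support_cons,
      pa.support_eq_cons, pb.support_eq_cons] at hsup
    rw [List.cons.injEq, List.cons.injEq] at hsup
    exact hab hsup.2.1

lemma single_edge_acyclic {V : Type*} (e : Sym2 V) :
    (SimpleGraph.fromEdgeSet {e}).IsAcyclic := by
  intro v c hc
  have hsub : ∀ e' ∈ c.edges, e' = e := by
    intro e' he'
    have := c.edges_subset_edgeSet he'
    rw [edgeSet_fromEdgeSet] at this
    exact this.1
  have hnodup : c.edges.Nodup := hc.isCircuit.isTrail.edges_nodup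
  have hlen : 3 ≤ c.edges.length := by
    rw [SimpleGraph.Walk.length_edges]
    exact hc.three_le_length
  have hcard : c.edges.toFinset.card = c.edges.length := List.toFinset_card_of_nodup hnodup
  have : c.edges.toFinset ⊆ {e} := by
    intro x hx
    rw [List.mem_toFinset] at hx
    rw [Finset.mem_singleton]
    exact hsub _ hx
  have := Finset.card_le_card this
  simp at this
  omega

lemma arboricity_mem {V : Type*} [Fintype V] (G : SimpleGraph V) [DecidableRel G.Adj] :
    ∃ f : Fin (arboricity G) → SimpleGraph V,
      (∀ i, (f i).IsAcyclic) ∧ (∀ i, f i ≤ G) ∧ G.edgeSet ⊆ ⋃ i, (f i).edgeSet := by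
  have hne : {k : ℕ | ∃ f : Fin k → SimpleGraph V,
      (∀ i, (f i).IsAcyclic) ∧ (∀ i, f i ≤ G) ∧ G.edgeSet ⊆ ⋃ i, (f i).edgeSet}.Nonempty := by
    refine ⟨G.edgeFinset.card, fun i => SimpleGraph.fromEdgeSet {(G.edgeFinset.equivFin.symm i : Sym2 V)}, ?_, ?_, ?_⟩
    · intro i; exact single_edge_acyclic _
    · intro i u v huv
      rw [fromEdgeSet_adj, Set.mem_singleton_iff] at huv
      have hmem : (G.edgeFinset.equivFin.symm i : Sym2 V) ∈ G.edgeFinset :=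
        (G.edgeFinset.equivFin.symm i).2
      rw [← huv.1] at hmem
      exact (SimpleGraph.mem_edgeSet G).mp (SimpleGraph.mem_edgeFinset.mp hmem)
    · intro e he
      rw [Set.mem_iUnion]
      refine ⟨G.edgeFinset.equivFin ⟨e, SimpleGraph.mem_edgeFinset.mpr he⟩, ?_⟩
      rw [edgeSet_fromEdgeSet, Equiv.symm_apply_apply]
      exact ⟨rfl, G.not_isDiag_of_mem_edgeSet he⟩
  exact Nat.sInf_mem hne

end Aux
section Main
open SimpleGraph

/-- If `τ ≥ p·α` with `p > 0`, then the sum of degrees of vertices of degree at most `τ`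
is at least `m·(1 − 2/p)`. -/
theorem light_degree_sum_ge {V : Type*} [Fintype V] (G : SimpleGraph V)
    [DecidableRel G.Adj] (τ p : ℝ) (hp : 0 < p)
    (hτ : p * (arboricity G : ℝ) ≤ τ) :
    (G.edgeFinset.card : ℝ) * (1 - 2 / p)
      ≤ ∑ v ∈ Finset.univ.filter (fun v => (G.degree v : ℝ) ≤ τ), (G.degree v : ℝ) := by
  classical
  set α := arboricity G with hα
  obtain ⟨F, hfa, hfle, hfcov⟩ := arboricity_mem G
  set L := Finset.univ.filter (fun v => (G.degree v : ℝ) ≤ τ) with hL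
  set Hs := Finset.univ.filter (fun v => ¬ ((G.degree v : ℝ) ≤ τ)) with hHs
  set m := G.edgeFinset.card with hm
  have hhs : (∑ v : V, (G.degree v : ℝ)) = 2 * (m : ℝ) := by
    exact_mod_cast congrArg (Nat.cast : ℕ → ℝ) G.sum_degrees_eq_twice_card_edges
  have hH1 : (Hs.card : ℝ) * τ ≤ 2 * (m : ℝ) := by
    calc (Hs.card : ℝ) * τ = ∑ _v ∈ Hs, τ := by rw [Finset.sum_const, nsmul_eq_mul]
    _ ≤ ∑ v ∈ Hs, (G.degree v : ℝ) :=
        Finset.sum_le_sum (fun v hv => le_of_lt (not_le.mp (Finset.mem_filter.mp hv).2))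
    _ ≤ ∑ v : V, (G.degree v : ℝ) :=
        Finset.sum_le_sum_of_subset_of_nonneg (Finset.subset_univ _)
          (fun v _ _ => Nat.cast_nonneg _)
    _ = 2 * (m : ℝ) := hhs
  set E_H := G.edgeFinset.filter (fun e => ∀ x ∈ e, x ∈ Hs) with hE_H
  have hEH : E_H.card ≤ Hs.card * α := by
    have hsub : E_H ⊆ Finset.univ.biUnion
        (fun i : Fin α => ((F i).edgeSet.toFinset.filter (fun e => ∀ x ∈ e, x ∈ Hs))) := by
      intro e he
      rw [hE_H, Finset.mem_filter] at he
      obtain ⟨i, hi⟩ := Set.mem_iUnion.mp (hfcov (SimpleGraph.mem_edgeFinset.mp he.1))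
      exact Finset.mem_biUnion.mpr ⟨i, Finset.mem_univ _,
        Finset.mem_filter.mpr ⟨Set.mem_toFinset.mpr hi, he.2⟩⟩
    calc E_H.card ≤ _ := Finset.card_le_card hsub
    _ ≤ ∑ i : Fin α, ((F i).edgeSet.toFinset.filter (fun e => ∀ x ∈ e, x ∈ Hs)).card :=
        Finset.card_biUnion_le
    _ ≤ ∑ _i : Fin α, Hs.card :=
        Finset.sum_le_sum (fun i _ => acyclic_card_filter_le (F i) (hfa i) Hs)
    _ = Hs.card * α := by simp [Finset.sum_const, mul_comm]
  have hLd : (m : ℝ) - (E_H.card : ℝ) ≤ ∑ v ∈ L, (G.degree v : ℝ) := by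
    set A := G.edgeFinset \ E_H with hA
    have h6 : E_H ⊆ G.edgeFinset := Finset.filter_subset _ _
    have hAcard : A.card = m - E_H.card := Finset.card_sdiff_of_subset h6
    have hsubA : A ⊆ L.biUnion (fun v => G.incidenceFinset v) := by
      intro e he
      rw [hA, Finset.mem_sdiff] at he
      have hne : ¬ (∀ x ∈ e, x ∈ Hs) := fun h =>
        he.2 (Finset.mem_filter.mpr ⟨he.1, h⟩)
      push_neg at hne
      obtain ⟨x, hxe, hxH⟩ := hne
      have hxL : x ∈ L := by
        rw [hHs, Finset.mem_filter] at hxH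
        push_neg at hxH
        exact Finset.mem_filter.mpr ⟨Finset.mem_univ _, hxH (Finset.mem_univ _)⟩
      exact Finset.mem_biUnion.mpr ⟨x, hxL,
        (G.mem_incidenceFinset _ _).mpr ⟨SimpleGraph.mem_edgeFinset.mp he.1, hxe⟩⟩
    have h5 : A.card ≤ ∑ v ∈ L, G.degree v :=
      le_trans (Finset.card_le_card hsubA) (le_trans Finset.card_biUnion_le
        (le_of_eq (Finset.sum_congr rfl (fun v _ => G.card_incidenceFinset_eq_degree v))))
    have h7 : (A.card : ℝ) ≤ ∑ v ∈ L, (G.degree v : ℝ) := by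
      rw [← Nat.cast_sum]
      exact_mod_cast h5
    have h8 : ((m : ℝ) - (E_H.card : ℝ)) = (A.card : ℝ) := by
      rw [hAcard, Nat.cast_sub (Finset.card_le_card h6)]
    linarith
  have h4a : (E_H.card : ℝ) ≤ (Hs.card : ℝ) * (α : ℝ) := by exact_mod_cast hEH
  have h4 : (E_H.card : ℝ) * p ≤ 2 * (m : ℝ) := by
    calc (E_H.card : ℝ) * p ≤ ((Hs.card : ℝ) * (α : ℝ)) * p :=
        mul_le_mul_of_nonneg_right h4a hp.le
    _ = (Hs.card : ℝ) * (p * (α : ℝ)) := by ring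
    _ ≤ (Hs.card : ℝ) * τ := mul_le_mul_of_nonneg_left hτ (Nat.cast_nonneg _)
    _ ≤ 2 * (m : ℝ) := hH1
  have h9 : (E_H.card : ℝ) ≤ 2 * (m : ℝ) / p := (le_div_iff₀ hp).mpr h4
  have hid : (m : ℝ) * (1 - 2 / p) = (m : ℝ) - 2 * (m : ℝ) / p := by ring
  linarith

end Main
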